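/- arXiv:1706.02986 — 10 statements merged into one kernel-verified Lean document; each statement's English description precedes it below -/
import Mathlib

section
/- Let a ≥ 8 and C ≥ 1 be reals, and define β(s) = C + (3/2)·ln(1 + ln s) for s ≥ 1. Then the quantity S = sup { s ≥ 1 : a·β(s) ≥ s } satisfies S ≤ a·C + 2·a·ln(1 + ln(a·C)), provided additionally C·(1 + ln(a·C)) ≥ 3 (so that the correction factor (C·(1+ln(aC)))/(C·(1+ln(aC)) − 3/2) is at most 2). -/
lemma log_le_div_e {y : ℝ} (hy : 0 < y) : Real.log y ≤ y / Real.exp 1 := by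
  have h := Real.log_le_sub_one_of_pos (show (0:ℝ) < y / Real.exp 1 by positivity)
  rw [Real.log_div (ne_of_gt hy) (Real.exp_ne_zero 1), Real.log_exp] at h
  linarith

lemma poly_ineq {x : ℝ} (hx : 3.07 ≤ x) : (1.271 * x + 0.368)^3 ≤ x^4 := by
  nlinarith [sq_nonneg (x - 3.07), sq_nonneg x, mul_nonneg (mul_nonneg (sub_nonneg.2 hx) (sub_nonneg.2 hx)) (sub_nonneg.2 hx), sq_nonneg (x - 4)]

set_option maxHeartbeats 1000000 in
/-- Log-log bound inversion (upper bound): for `a ≥ 8`, `C ≥ 1` with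
`C·(1 + ln(aC)) ≥ 3`, the supremum `S = sup {s ≥ 1 : a·β(s) ≥ s}` where
`β(s) = C + (3/2)·ln(1 + ln s)` satisfies `S ≤ aC + 2a·ln(1 + ln(aC))`. -/
theorem stmt1 (a C : ℝ) (ha : 8 ≤ a) (hC : 1 ≤ C)
    (hcorr : 3 ≤ C * (1 + Real.log (a * C))) :
    sSup {s : ℝ | 1 ≤ s ∧ s ≤ a * (C + 3 / 2 * Real.log (1 + Real.log s))}
      ≤ a * C + 2 * a * Real.log (1 + Real.log (a * C)) := by
  have haC : (8:ℝ) ≤ a * C := by nlinarith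
  have haC0 : (0:ℝ) < a * C := by linarith
  set x := 1 + Real.log (a*C) with hxdef
  have hlog2 : (0.6931:ℝ) ≤ Real.log 2 := by
    have := Real.log_two_gt_d9; linarith
  have hlog8 : (2.07:ℝ) ≤ Real.log (a*C) := by
    have h8 : Real.log 8 ≤ Real.log (a*C) := Real.log_le_log (by norm_num) haC
    have h83 : Real.log 8 = 3 * Real.log 2 := by
      rw [show (8:ℝ) = 2^3 by norm_num, Real.log_pow]; push_cast; ring
    linarith
  have hxeq : Real.log (a*C) = x - 1 := by rw [hxdef]; ring
  have hx3 : (3.07:ℝ) ≤ x := by rw [hxdef]; linarith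
  set L := Real.log x with hLdef
  have hL0 : (0:ℝ) ≤ L := Real.log_nonneg (by linarith)
  set B := a*C + 2*a*L with hBdef
  have hBaC : a*C ≤ B := by nlinarith
  have hB0 : (0:ℝ) < B := by linarith
  have hxB : x ≤ 1 + Real.log B := by
    have := Real.log_le_log haC0 hBaC
    rw [hxdef]; linarith
  have h1lB : (0:ℝ) < 1 + Real.log B := by linarith
  have he : (2.7182:ℝ) ≤ Real.exp 1 := by have := Real.exp_one_gt_d9; linarith
  have he0 : (0:ℝ) < Real.exp 1 := Real.exp_pos 1
  have hx0 : (0:ℝ) ≤ x := by linarith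
  have hLx : L ≤ x / Real.exp 1 := log_le_div_e (by linarith)
  -- 1 + log B ≤ 1.271 x + 0.368
  have hkey1 : 1 + Real.log B ≤ 1.271 * x + 0.368 := by
    have h2L0 : (0:ℝ) < 1 + 2*L := by linarith
    have hlnB : Real.log B ≤ Real.log (a*C) + Real.log (1 + 2*L) := by
      have h2 : B ≤ (a*C) * (1 + 2*L) := by nlinarith
      have := Real.log_le_log hB0 h2
      rwa [Real.log_mul (ne_of_gt haC0) (ne_of_gt h2L0)] at this
    have hln2L : Real.log (1+2*L) ≤ (1 + 2*(x/Real.exp 1))/Real.exp 1 := by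
      have h1 := log_le_div_e h2L0
      have h2 : (1 + 2*L)/Real.exp 1 ≤ (1 + 2*(x/Real.exp 1))/Real.exp 1 := by
        gcongr
      linarith
    have hnum : (1 + 2*(x/Real.exp 1))/Real.exp 1 ≤ 0.271 * x + 0.368 := by
      have hA : x / Real.exp 1 ≤ x / 2.7182 :=
        div_le_div_of_nonneg_left hx0 (by norm_num) he
      have hnn : (0:ℝ) ≤ 1 + 2*(x/Real.exp 1) := by positivity
      have hstep1 : (1 + 2*(x/Real.exp 1))/Real.exp 1 ≤ (1 + 2*(x/2.7182))/2.7182 := by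
        calc (1 + 2*(x/Real.exp 1))/Real.exp 1 ≤ (1 + 2*(x/Real.exp 1))/2.7182 :=
              div_le_div_of_nonneg_left hnn (by norm_num) he
          _ ≤ (1 + 2*(x/2.7182))/2.7182 :=
              (div_le_div_iff_of_pos_right (by norm_num)).mpr (by linarith)
      have hstep2 : (1 + 2*(x/2.7182))/2.7182 ≤ 0.271 * x + 0.368 := by
        rw [div_le_iff₀ (by norm_num : (0:ℝ) < 2.7182)]
        have : x/2.7182 * 2.7182 = x := by field_simp
        nlinarith [hx0]
      linarith
    linarith [hlnB, hln2L, hnum, hxeq]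
  -- 3 log(1+log B) ≤ 4 L
  have hC2 : 3 * Real.log (1 + Real.log B) ≤ 4 * L := by
    have hp : (1 + Real.log B)^3 ≤ x^4 := by
      calc (1 + Real.log B)^3 ≤ (1.271*x + 0.368)^3 := by
            apply pow_le_pow_left₀ h1lB.le hkey1
        _ ≤ x^4 := poly_ineq hx3
    have hlp := Real.log_le_log (by positivity) hp
    rw [Real.log_pow, Real.log_pow] at hlp
    push_cast at hlp
    rw [hLdef]; linarith
  -- coefficient bound: 3a ≤ B(1+log B)
  have hcoef : 3*a ≤ B * (1 + Real.log B) := by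
    have h1 : a * (C * x) ≤ B * (1 + Real.log B) := by
      have := mul_le_mul hBaC hxB (by linarith) (le_of_lt hB0)
      nlinarith [this]
    nlinarith [h1]
  have ha0 : (0:ℝ) < a := by linarith
  -- main bound on set members
  have key : ∀ s : ℝ, 1 ≤ s → s ≤ a*(C + 3/2*Real.log (1+Real.log s)) → s ≤ B := by
    intro s hs1 hs2
    have hs0 : (0:ℝ) < s := by linarith
    have hls : (0:ℝ) ≤ Real.log s := Real.log_nonneg hs1
    have h1ls : (0:ℝ) < 1 + Real.log s := by linarith
    have hc1 : Real.log s ≤ Real.log B + s/B - 1 := by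
      have h := Real.log_le_sub_one_of_pos (show (0:ℝ) < s/B by positivity)
      rw [Real.log_div (ne_of_gt hs0) (ne_of_gt hB0)] at h
      linarith
    have hc2 : Real.log (1+Real.log s) ≤ Real.log (1+Real.log B)
        + (Real.log s - Real.log B)/(1+Real.log B) := by
      have h := Real.log_le_sub_one_of_pos
        (show (0:ℝ) < (1+Real.log s)/(1+Real.log B) by positivity)
      rw [Real.log_div (ne_of_gt h1ls) (ne_of_gt h1lB)] at h
      have heq : (1+Real.log s)/(1+Real.log B) - 1
          = (Real.log s - Real.log B)/(1+Real.log B) := by field_simp; ring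
      linarith [h, heq.le, heq.ge]
    have hc3 : (Real.log s - Real.log B)/(1+Real.log B) ≤ (s/B - 1)/(1+Real.log B) :=
      (div_le_div_iff_of_pos_right h1lB).mpr (by linarith)
    by_contra hcon
    push_neg at hcon
    have hsB0 : (0:ℝ) ≤ s - B := by linarith
    have h4 : Real.log (1+Real.log s) ≤ Real.log (1+Real.log B) + (s/B-1)/(1+Real.log B) := by
      linarith
    have h4a := mul_le_mul_of_nonneg_left h4 (le_of_lt ha0)
    have hC2a := mul_le_mul_of_nonneg_left hC2 (le_of_lt ha0)
    have hstep : s ≤ a*C + 2*a*L + 3/2*(a*((s/B - 1)/(1+Real.log B))) := by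
      nlinarith [hs2, h4a, hC2a]
    have heq2 : (s/B - 1)/(1+Real.log B) = (s-B)/(B*(1+Real.log B)) := by
      field_simp
    have h5 : (s-B)/(B*(1+Real.log B)) ≤ (s-B)/(3*a) :=
      div_le_div_of_nonneg_left hsB0 (by positivity) hcoef
    have h5a := mul_le_mul_of_nonneg_left h5 (by linarith : (0:ℝ) ≤ 3/2*a)
    have h6 : 3/2*a*((s-B)/(3*a)) = 1/2*(s-B) := by
      field_simp
    rw [heq2] at hstep
    nlinarith [hstep, h5a, h6]
  apply Real.sSup_le
  · rintro s ⟨hs1, hs2⟩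
    exact key s hs1 hs2
  · nlinarith [mul_nonneg (le_of_lt (show (0:ℝ) < a by linarith)) hL0]
end

section
/- Let a ≥ 1 and C ≥ 1 be reals and define β(s) = C + (3/2)·ln(1 + ln s). Then a·β(s₀) ≥ s₀ where s₀ = a·C + (3/2)·a·ln(1 + ln(a·C)). In other words, the supremum S = sup { s ≥ 1 : a·β(s) ≥ s } satisfies S ≥ a·C + (3/2)·a·ln(1 + ln(a·C)). -/
/-- Log-log bound inversion (lower bound): for `a ≥ 1`, `C ≥ 1` and
`β(s) = C + (3/2)·ln(1 + ln s)`, we have `a·β(s₀) ≥ s₀` at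
`s₀ = aC + (3/2)·a·ln(1 + ln(aC))`; hence `sup {s ≥ 1 : a·β(s) ≥ s} ≥ s₀`. -/
theorem stmt2 (a C : ℝ) (ha : 1 ≤ a) (hC : 1 ≤ C) :
    a * C + 3 / 2 * a * Real.log (1 + Real.log (a * C)) ≤
      a * (C + 3 / 2 * Real.log (1 + Real.log
        (a * C + 3 / 2 * a * Real.log (1 + Real.log (a * C))))) ∧
    a * C + 3 / 2 * a * Real.log (1 + Real.log (a * C)) ≤
      sSup {s : ℝ | 1 ≤ s ∧ s ≤ a * (C + 3 / 2 * Real.log (1 + Real.log s))} := by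
  have haC : 1 ≤ a * C := by nlinarith
  have hlogaC : 0 ≤ Real.log (a * C) := Real.log_nonneg haC
  have hL : 0 ≤ Real.log (1 + Real.log (a * C)) := Real.log_nonneg (by linarith)
  set s₀ := a * C + 3 / 2 * a * Real.log (1 + Real.log (a * C)) with hs₀
  have hterm : 0 ≤ 3 / 2 * a * Real.log (1 + Real.log (a * C)) := by positivity
  have hs₀ge : a * C ≤ s₀ := by simp [hs₀]; linarith
  have hs₀1 : 1 ≤ s₀ := le_trans haC hs₀ge
  have hlogmono : Real.log (a * C) ≤ Real.log s₀ :=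
    Real.log_le_log (by linarith) hs₀ge
  have hpart1 : s₀ ≤ a * (C + 3 / 2 * Real.log (1 + Real.log s₀)) := by
    have h1 : Real.log (1 + Real.log (a * C)) ≤ Real.log (1 + Real.log s₀) :=
      Real.log_le_log (by linarith) (by linarith)
    have ha0 : 0 ≤ a := by linarith
    nlinarith [mul_le_mul_of_nonneg_left h1 ha0]
  refine ⟨hpart1, ?_⟩
  apply le_csSup
  · -- bounded above by (a*C + 3*a)^2
    refine ⟨(a * C + 3 * a) ^ 2, ?_⟩
    rintro s ⟨hs1, hsle⟩
    have hs0 : 0 < s := by linarith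
    have hsq1 : 1 ≤ Real.sqrt s := Real.one_le_sqrt.mpr hs1
    have hlogs0 : 0 ≤ Real.log s := Real.log_nonneg hs1
    have h1 : Real.log (1 + Real.log s) ≤ Real.log s := by
      have := Real.log_le_sub_one_of_pos (x := 1 + Real.log s) (by linarith)
      linarith
    have h2 : Real.log s ≤ 2 * Real.sqrt s := by
      have hls : Real.log (Real.sqrt s) ≤ Real.sqrt s - 1 :=
        Real.log_le_sub_one_of_pos (Real.sqrt_pos.mpr hs0)
      have := Real.log_sqrt hs0.le
      linarith
    have h3 : s ≤ (a * C + 3 * a) * Real.sqrt s := by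
      have ha0 : 0 ≤ a := by linarith
      have hCsq : a * C ≤ a * C * Real.sqrt s := by
        nlinarith
      have : s ≤ a * C + 3 * a * Real.sqrt s := by
        nlinarith [mul_le_mul_of_nonneg_left h1 ha0,
          mul_le_mul_of_nonneg_left h2 ha0]
      nlinarith
    have h4 : Real.sqrt s ≤ a * C + 3 * a := by
      have hsqsq : Real.sqrt s * Real.sqrt s = s := Real.mul_self_sqrt hs0.le
      nlinarith
    nlinarith [Real.sq_sqrt hs0.le, Real.sqrt_nonneg s]
  · exact ⟨hs₀1, hpart1⟩
end

section
/- Let a ≥ 1, C ≥ 1 be reals with C·(1 + ln(a·C)) > 3/2, and set K = (C·(1+ln(aC)))/(C·(1+ln(aC)) − 3/2). Then ln(1 + ln(a·C + (3/2)·a·K·ln(1+ln(aC)))) ≤ K·ln(1 + ln(a·C)). -/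
/-- Key step in inverting the bound `a·(C + (3/2)·ln(1 + ln s)) ≥ s`: with
`K = C(1+ln(aC)) / (C(1+ln(aC)) − 3/2)`,
`ln(1 + ln(aC + (3/2)·a·K·ln(1+ln(aC)))) ≤ K·ln(1 + ln(aC))`. -/
theorem stmt3 (a C : ℝ) (ha : 1 ≤ a) (hC : 1 ≤ C)
    (h : 3 / 2 < C * (1 + Real.log (a * C)))
    (K : ℝ)
    (hK : K = C * (1 + Real.log (a * C)) / (C * (1 + Real.log (a * C)) - 3 / 2)) :
    Real.log (1 + Real.log
        (a * C + 3 / 2 * a * K * Real.log (1 + Real.log (a * C))))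
      ≤ K * Real.log (1 + Real.log (a * C)) := by
  have hac1 : (1:ℝ) ≤ a * C := by nlinarith
  have hL0 : 0 ≤ Real.log (a * C) := Real.log_nonneg hac1
  set L := Real.log (a * C) with hLdef
  have h1L : (1:ℝ) ≤ 1 + L := by linarith
  have hl0 : 0 ≤ Real.log (1 + L) := Real.log_nonneg h1L
  set l := Real.log (1 + L) with hldef
  have hC0 : (0:ℝ) < C := by linarith
  have ha0 : (0:ℝ) < a := by linarith
  have hT : (3:ℝ)/2 < C * (1 + L) := h
  have hT0 : (0:ℝ) < C * (1 + L) := by linarith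
  have hK0 : 0 < K := by
    rw [hK]; apply div_pos hT0; linarith
  have hden : C * (1 + L) - 3/2 ≠ 0 := by linarith
  have hKT' : K * (C * (1 + L) - 3/2) = C * (1 + L) := by
    rw [hK, div_mul_cancel₀ _ hden]
  have hKT : K * (C * (1 + L)) = C * (1 + L) + 3/2 * K := by
    linear_combination hKT'
  -- step 1
  have hX : a * C + 3/2 * a * K * l = (a * C) * (1 + 3/2 * K * l / C) := by
    field_simp
  have hfac : (0:ℝ) < 1 + 3/2 * K * l / C := by positivity
  have hlogX : Real.log (a * C + 3/2 * a * K * l) ≤ L + 3/2 * K * l / C := by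
    rw [hX, Real.log_mul (by positivity) (by positivity)]
    have := Real.log_le_sub_one_of_pos hfac
    rw [← hLdef]
    linarith
  have hXge : (1:ℝ) ≤ a * C + 3/2 * a * K * l := by
    have : (0:ℝ) ≤ 3/2 * a * K * l := by positivity
    linarith
  have hlogX0 : 0 ≤ Real.log (a * C + 3/2 * a * K * l) := Real.log_nonneg hXge
  have step2 : Real.log (1 + Real.log (a * C + 3/2 * a * K * l)) ≤
      Real.log (1 + (L + 3/2 * K * l / C)) :=
    Real.log_le_log (by linarith) (by linarith)
  -- step 3
  have hfac2 : (0:ℝ) < 1 + 3/2 * K * l / (C * (1 + L)) := by positivity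
  have hsplit : 1 + (L + 3/2 * K * l / C) = (1 + L) * (1 + 3/2 * K * l / (C * (1 + L))) := by
    field_simp; ring
  have step3 : Real.log (1 + (L + 3/2 * K * l / C)) ≤ l + 3/2 * K * l / (C * (1 + L)) := by
    rw [hsplit, Real.log_mul (by linarith) (by positivity)]
    have := Real.log_le_sub_one_of_pos hfac2
    rw [← hldef]
    linarith
  have final : l + 3/2 * K * l / (C * (1 + L)) = K * l := by
    have hd : 3/2 * K * l / (C * (1 + L)) = (K - 1) * l := by
      rw [div_eq_iff hT0.ne']
      linear_combination (-l) * hKT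
    rw [hd]; ring
  linarith
end

section
/- Under the setting of nested representative-path confidence intervals: suppose all leaf intervals are valid (μ_ℓ ∈ [L_ℓ, U_ℓ] for all leaves ℓ), the leaf ℓ = s_D is the representative leaf of the node s_1 along the path s_1, ..., s_D, and the leaf interval has half-width w, i.e. U_ℓ − L_ℓ = 2w. Then 2w ≥ max_{k=2,...,D} |V(s_k) − V(s_{k−1})|, where V denotes the maximin value of each node. -/
/-- A finite rooted maximin game tree: leaves carry a value `μ` and interval
endpoints `L`, `U`; internal nodes are MAX (`isMax = true`) or MIN nodes with a
nonempty finite family of children. -/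
inductive GTree where
  | leaf (μ L U : ℝ) : GTree
  | node (isMax : Bool) (n : ℕ) (children : Fin (n + 1) → GTree) : GTree

/-- The maximin value of every node. -/
noncomputable def GTree.val : GTree → ℝ
  | .leaf μ _ _ => μ
  | .node true _ c => ⨆ i, (c i).val
  | .node false _ c => ⨅ i, (c i).val

/-- Lower interval endpoints, propagated upwards. -/
noncomputable def GTree.lb : GTree → ℝ
  | .leaf _ L _ => L
  | .node true _ c => ⨆ i, (c i).lb
  | .node false _ c => ⨅ i, (c i).lb

/-- Upper interval endpoints, propagated upwards. -/
noncomputable def GTree.ub : GTree → ℝ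
  | .leaf _ _ U => U
  | .node true _ c => ⨆ i, (c i).ub
  | .node false _ c => ⨅ i, (c i).ub

/-- All leaf intervals of the tree are valid: `μ ∈ [L, U]`. -/
def GTree.valid : GTree → Prop
  | .leaf μ L U => L ≤ μ ∧ μ ≤ U
  | .node _ _ c => ∀ i, (c i).valid

def GTree.IsRepChild : GTree → GTree → Prop
  | .leaf _ _ _, _ => False
  | .node true _ ch, c => (∃ i, c = ch i) ∧ c.ub = ⨆ j, (ch j).ub
  | .node false _ ch, c => (∃ i, c = ch i) ∧ c.lb = ⨅ j, (ch j).lb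

def GTree.isLeaf : GTree → Prop
  | .leaf _ _ _ => True
  | .node _ _ _ => False

lemma GTree.valid_bounds : ∀ t : GTree, t.valid → t.lb ≤ t.val ∧ t.val ≤ t.ub := by
  intro t
  induction t with
  | leaf μ L U => exact fun h => h
  | node b n c ih =>
    intro h
    cases b with
    | false =>
      exact ⟨ciInf_mono (Set.finite_range _).bddBelow fun i => (ih i (h i)).1,
             ciInf_mono (Set.finite_range _).bddBelow fun i => (ih i (h i)).2⟩
    | true =>
      exact ⟨ciSup_mono (Set.finite_range _).bddAbove fun i => (ih i (h i)).1,
             ciSup_mono (Set.finite_range _).bddAbove fun i => (ih i (h i)).2⟩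

lemma GTree.rep_sub {s c : GTree} (h : s.IsRepChild c) : c.lb ≤ s.lb ∧ s.ub ≤ c.ub := by
  cases s with
  | leaf μ L U => exact absurd h (fun h => h)
  | node b n ch =>
    cases b with
    | false =>
      obtain ⟨⟨i, rfl⟩, he⟩ := h
      exact ⟨le_of_eq he, ciInf_le (Set.finite_range _).bddBelow i⟩
    | true =>
      obtain ⟨⟨i, rfl⟩, he⟩ := h
      refine ⟨?_, le_of_eq he.symm⟩
      show (ch i).lb ≤ ⨆ j, (ch j).lb
      exact le_ciSup (Set.finite_range fun j => (ch j).lb).bddAbove i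

lemma GTree.rep_valid {s c : GTree} (hs : s.valid) (h : s.IsRepChild c) : c.valid := by
  cases s with
  | leaf μ L U => exact absurd h (fun h => h)
  | node b n ch =>
    cases b with
    | false => obtain ⟨⟨i, rfl⟩, -⟩ := h; exact hs i
    | true => obtain ⟨⟨i, rfl⟩, -⟩ := h; exact hs i

/-- If all leaf intervals below `s_1 = p 0` are valid, `ℓ = p D` is the
representative leaf of `p 0` along the path `p 0, …, p D`, and the leaf interval
has half-width `w` (`U_ℓ - L_ℓ = 2w`), then `2w ≥ |V(s_k) - V(s_{k-1})|` for
every consecutive pair along the path. -/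
theorem stmt6 (D : ℕ) (hD : 1 ≤ D) (p : ℕ → GTree) (w : ℝ)
    (hvalid : (p 0).valid)
    (hrep : ∀ k < D, (p k).IsRepChild (p (k + 1)))
    (hleaf : (p D).isLeaf)
    (hw : (p D).ub - (p D).lb = 2 * w) :
    ∀ k < D, |(p (k + 1)).val - (p k).val| ≤ 2 * w :=  by
  have hvalidk : ∀ k ≤ D, (p k).valid := by
    intro k
    induction k with
    | zero => intro _; exact hvalid
    | succ k ih =>
      intro hk
      exact GTree.rep_valid (ih (by omega)) (hrep k (by omega))
  have hsub : ∀ k ≤ D, (p D).lb ≤ (p k).lb ∧ (p k).ub ≤ (p D).ub := by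
    suffices H : ∀ j, ∀ k, k + j = D → (p D).lb ≤ (p k).lb ∧ (p k).ub ≤ (p D).ub by
      intro k hk; exact H (D - k) k (by omega)
    intro j
    induction j with
    | zero => intro k hk; simp [show k = D by omega]
    | succ j ih =>
      intro k hk
      have h1 := GTree.rep_sub (hrep k (by omega))
      have h2 := ih (k + 1) (by omega)
      exact ⟨h2.1.trans h1.1, h1.2.trans h2.2⟩
  intro k hk
  have a1 := GTree.valid_bounds (p k) (hvalidk k (by omega))
  have a2 := GTree.valid_bounds (p (k + 1)) (hvalidk (k + 1) (by omega))
  have b1 := hsub k (by omega)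
  have b2 := hsub (k + 1) (by omega)
  rw [abs_sub_le_iff]
  constructor <;> linarith [a1.1, a1.2, a2.1, a2.2, b1.1, b1.2, b2.1, b2.2]
end

section
/- Consider finitely many arms i ∈ S, each with an interval [L_i, U_i]. Define the UGapE index B_i = max_{j ≠ i} U_j − L_i, let b = argmin_i B_i and c = argmax_{j ≠ b} U_j. Then: (1) if U_b − L_b ≥ U_c − L_c (i.e. b has the wider interval and is selected) then U_c ≤ U_b; (2) if U_c − L_c ≥ U_b − L_b (i.e. c is selected) then L_c ≤ L_b. -/
/-- UGapE structural lemma: with `B_i = max_{j≠i} U_j − L_i`, `b` a minimizer of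
`B` and `c` a maximizer of `U` over the other arms, (1) if `b` has the wider
interval then `U_c ≤ U_b`; (2) if `c` has the wider interval then `L_c ≤ L_b`. -/
theorem stmt7 {ι : Type*} [Fintype ι] (hcard : 1 < Fintype.card ι)
    (L U : ι → ℝ) (hLU : ∀ i, L i ≤ U i)
    (B : ι → ℝ) (hB : ∀ i, B i = sSup (U '' {j | j ≠ i}) - L i)
    (b c : ι) (hb : ∀ i, B b ≤ B i)
    (hcb : c ≠ b) (hc : ∀ j, j ≠ b → U j ≤ U c) :
    (U c - L c ≤ U b - L b → U c ≤ U b) ∧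
    (U b - L b ≤ U c - L c → L c ≤ L b) := by
  have hbdd : ∀ i : ι, BddAbove (U '' {j | j ≠ i}) := fun i => (Set.toFinite _).bddAbove
  have h1 : sSup (U '' {j | j ≠ b}) = U c := by
    refine le_antisymm (csSup_le ⟨U c, c, hcb, rfl⟩ ?_) (le_csSup (hbdd b) ⟨c, hcb, rfl⟩)
    rintro x ⟨j, hj, rfl⟩
    exact hc j hj
  have h2 : sSup (U '' {j | j ≠ c}) ≤ max (U b) (U c) := by
    refine csSup_le ⟨U b, b, hcb.symm, rfl⟩ ?_
    rintro x ⟨j, hj, rfl⟩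
    by_cases hjb : j = b
    · exact hjb ▸ le_max_left _ _
    · exact le_trans (hc j hjb) (le_max_right _ _)
  have key : U c - L b ≤ max (U b) (U c) - L c := by
    have := hb c
    rw [hB b, hB c, h1] at this
    linarith
  rcases le_total (U b) (U c) with h | h
  · rw [max_eq_right h] at key
    exact ⟨fun h' => by linarith, fun _ => by linarith⟩
  · rw [max_eq_left h] at key
    exact ⟨fun _ => h, fun h' => by linarith⟩
end

section
/- Under the UGapE setting (arms with intervals [L_i, U_i], b = argmin_i B_i where B_i = max_{j≠i} U_j − L_i, and c = argmax_{j≠b} U_j): if the stopping condition fails, i.e. U_c − L_b > ε, and the selected arm R ∈ {b, c} is the one with the wider interval, then U_R − L_R > ε. -/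
/-- UGapE: if the stopping condition fails (`U_c − L_b > ε`) and the selected arm
`R ∈ {b, c}` is the one with the wider interval, then `U_R − L_R > ε`. -/
theorem stmt8 {ι : Type*} [Fintype ι] (hcard : 1 < Fintype.card ι)
    (L U : ι → ℝ) (hLU : ∀ i, L i ≤ U i) (ε : ℝ) (hε : 0 ≤ ε)
    (B : ι → ℝ) (hB : ∀ i, B i = sSup (U '' {j | j ≠ i}) - L i)
    (b c : ι) (hb : ∀ i, B b ≤ B i)
    (hcb : c ≠ b) (hc : ∀ j, j ≠ b → U j ≤ U c)
    (R : ι) (hR : R = b ∨ R = c)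
    (hwide : U b - L b ≤ U R - L R ∧ U c - L c ≤ U R - L R)
    (hstop : ε < U c - L b) :
    ε < U R - L R := by
  -- B b = U c - L b
  have hne : Set.Nonempty (U '' {j | j ≠ b}) := ⟨U c, c, hcb, rfl⟩
  have hBb : B b = U c - L b := by
    rw [hB b]
    congr 1
    refine le_antisymm (csSup_le hne ?_) (le_csSup (Set.Finite.bddAbove (Set.toFinite _)) ⟨c, hcb, rfl⟩)
    rintro x ⟨j, hj, rfl⟩
    exact hc j hj
  -- facts about sSup over {j ≠ c}
  set s := sSup (U '' {j | j ≠ c}) with hs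
  have hUbs : U b ≤ s := le_csSup (Set.Finite.bddAbove (Set.toFinite _)) ⟨b, hcb.symm, rfl⟩
  have hBc : B c = s - L c := hB c
  have hbc := hb c
  rw [hBb, hBc] at hbc
  have hsle : s ≤ max (U b) (U c) := by
    refine csSup_le ⟨U b, b, hcb.symm, rfl⟩ ?_
    rintro x ⟨j, hj, rfl⟩
    by_cases hjb : j = b
    · subst hjb; exact le_max_left _ _
    · exact le_trans (hc j hjb) (le_max_right _ _)
  rcases le_total (U b) (U c) with h1 | h1
  · rw [max_eq_right h1] at hsle
    rcases hR with rfl | rfl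
    · -- R = b: U c ≤ U b, contradiction route with hwide.2
      by_contra h
      push_neg at h
      have h2 := hwide.2
      linarith
    · by_contra h
      push_neg at h
      linarith [hwide.1]
  · rw [max_eq_left h1] at hsle
    rcases hR with rfl | rfl
    · linarith
    · by_contra h
      push_neg at h
      linarith [hwide.1]
end

section
/- Let d(x,y) = x·ln(x/y) + (1−x)·ln((1−x)/(1−y)) denote the binary Kullback–Leibler divergence for x, y ∈ (0,1). Then for all δ ∈ (0, 1/2), d(δ, 1−δ) ≥ ln(1/(2.4·δ)). -/
lemma tang (a x : ℝ) (ha : 0 < a) (hx : 0 < x) :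
    Real.log a + 1 - a / x ≤ Real.log x := by
  have h := Real.log_le_sub_one_of_pos (div_pos ha hx)
  rw [Real.log_div ha.ne' hx.ne'] at h
  linarith

lemma log3_lb : (1.0986122 : ℝ) ≤ Real.log 3 := by
  have h2 := Real.log_two_gt_d9
  have key : Real.log ((3:ℝ)^53 / 2^84) = 53 * Real.log 3 - 84 * Real.log 2 := by
    rw [Real.log_div (by positivity) (by positivity), Real.log_pow, Real.log_pow]
    push_cast; ring
  have h' : -Real.log ((3:ℝ)^53 / 2^84) ≤ -0.0020859 := by
    rw [← Real.log_inv, inv_div]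
    have h := Real.log_le_sub_one_of_pos (show (0:ℝ) < 2^84/3^53 by positivity)
    have hnum : (2:ℝ)^84/3^53 - 1 ≤ -0.0020859 := by norm_num
    linarith
  linarith

lemma log3_ub : Real.log 3 ≤ (1.0986124 : ℝ) := by
  have h2 := Real.log_two_lt_d9
  have key : Real.log ((3:ℝ)^53 / 2^84) = 53 * Real.log 3 - 84 * Real.log 2 := by
    rw [Real.log_div (by positivity) (by positivity), Real.log_pow, Real.log_pow]
    push_cast; ring
  have h := Real.log_le_sub_one_of_pos (show (0:ℝ) < 3^53/2^84 by positivity)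
  have hnum : (3:ℝ)^53/2^84 - 1 ≤ 0.0020904 := by norm_num
  linarith

lemma log5_lb : (1.6094377 : ℝ) ≤ Real.log 5 := by
  have h2 := Real.log_two_gt_d9
  have key : Real.log ((5:ℝ)^87 / 2^202) = 87 * Real.log 5 - 202 * Real.log 2 := by
    rw [Real.log_div (by positivity) (by positivity), Real.log_pow, Real.log_pow]
    push_cast; ring
  have h' : -Real.log ((5:ℝ)^87 / 2^202) ≤ -0.0053535 := by
    rw [← Real.log_inv, inv_div]
    have h := Real.log_le_sub_one_of_pos (show (0:ℝ) < 2^202/5^87 by positivity)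
    have hnum : (2:ℝ)^202/5^87 - 1 ≤ -0.0053535 := by norm_num
    linarith
  linarith

lemma log5_ub : Real.log 5 ≤ (1.6094381 : ℝ) := by
  have h2 := Real.log_two_lt_d9
  have key : Real.log ((5:ℝ)^87 / 2^202) = 87 * Real.log 5 - 202 * Real.log 2 := by
    rw [Real.log_div (by positivity) (by positivity), Real.log_pow, Real.log_pow]
    push_cast; ring
  have h := Real.log_le_sub_one_of_pos (show (0:ℝ) < 5^87/2^202 by positivity)
  have hnum : (5:ℝ)^87/2^202 - 1 ≤ 0.0053824 := by norm_num
  linarith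

lemma log7_lb : (1.9459098 : ℝ) ≤ Real.log 7 := by
  have h2 := Real.log_two_gt_d9
  have key : Real.log ((7:ℝ)^83 / 2^233) = 83 * Real.log 7 - 233 * Real.log 2 := by
    rw [Real.log_div (by positivity) (by positivity), Real.log_pow, Real.log_pow]
    push_cast; ring
  have h' : -Real.log ((7:ℝ)^83 / 2^233) ≤ -0.007223 := by
    rw [← Real.log_inv, inv_div]
    have h := Real.log_le_sub_one_of_pos (show (0:ℝ) < 2^233/7^83 by positivity)
    have hnum : (2:ℝ)^233/7^83 - 1 ≤ -0.007223 := by norm_num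
    linarith
  linarith

lemma log7_ub : Real.log 7 ≤ (1.9459105 : ℝ) := by
  have h2 := Real.log_two_lt_d9
  have key : Real.log ((7:ℝ)^83 / 2^233) = 83 * Real.log 7 - 233 * Real.log 2 := by
    rw [Real.log_div (by positivity) (by positivity), Real.log_pow, Real.log_pow]
    push_cast; ring
  have h := Real.log_le_sub_one_of_pos (show (0:ℝ) < 7^83/2^233 by positivity)
  have hnum : (7:ℝ)^83/2^233 - 1 ≤ 0.0072757 := by norm_num
  linarith

lemma log24_lb : (0.8754684 : ℝ) ≤ Real.log (12/5) := by
  have h2 := Real.log_two_gt_d9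
  have h3 := log3_lb
  have h5 := log5_ub
  have key : Real.log ((12:ℝ)/5) = 2 * Real.log 2 + Real.log 3 - Real.log 5 := by
    rw [show ((12:ℝ)/5) = 2^2*3/5 by norm_num, Real.log_div (by positivity) (by positivity),
      Real.log_mul (by positivity) (by positivity), Real.log_pow]
    push_cast; ring
  linarith

lemma ivl_step (δ a l r La Lb c0 c1 : ℝ) (ha : 0 < a) (ha1 : a < 1)
    (h1 : 0 < δ) (h2 : δ < 1/2) (hl : l ≤ δ) (hr : δ ≤ r)
    (hLa : La ≤ Real.log a) (hLb : Lb ≤ Real.log (1-a))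
    (hsec : (1-2*δ)*((1-a)/(1-δ)) ≤ (1-a)*(c0+c1*δ))
    (hfin : 0 ≤ 2*(δ*(La+1)-a) + (1-2*δ)*(Lb+1) - (1-a)*(c0+c1*δ) + 0.8754684) :
    0 ≤ 2*δ*Real.log δ + (1-2*δ)*Real.log (1-δ) + Real.log (12/5) := by
  have h1δ : 0 < 1 - δ := by linarith
  have h12 : (0:ℝ) ≤ 1 - 2*δ := by linarith
  have hta := tang a δ ha h1
  have htb := tang (1-a) (1-δ) (by linarith) h1δ
  have hA : δ*(La + 1 - a/δ) ≤ δ*Real.log δ :=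
    mul_le_mul_of_nonneg_left (by linarith) h1.le
  have hA' : δ*(a/δ) = a := by field_simp
  have hB : (1-2*δ)*(Lb + 1 - (1-a)/(1-δ)) ≤ (1-2*δ)*Real.log (1-δ) :=
    mul_le_mul_of_nonneg_left (by linarith) h12
  have hL24 := log24_lb
  nlinarith [hA, hA', hB, hsec, hfin, hL24]

lemma logA_9_49 : (-1.6945966 : ℝ) ≤ Real.log (9/49) := by
  have hp0 := log3_lb
  have hp1 := log7_ub
  have key : Real.log ((9:ℝ)/49) = (2:ℝ) * Real.log 3 + (-2:ℝ) * Real.log 7 := by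
    rw [show ((9:ℝ)/49) = (3^2)/(7^2) by norm_num,
      Real.log_div (by positivity) (by positivity)]
    simp only [Real.log_mul, Real.log_pow, Real.log_one, (by norm_num : ((1:ℝ)) ≠ 0),
      ne_eq, OfNat.ofNat_ne_zero, not_false_eq_true, pow_ne_zero, mul_ne_zero]
    try rw [Real.log_mul (by positivity) (by positivity)]
    try rw [Real.log_mul (by positivity) (by positivity)]
    simp [Real.log_pow]
    try push_cast
    try ring
  linarith

lemma logA_40_49 : (-0.2029418 : ℝ) ≤ Real.log (40/49) := by
  have hp0 := Real.log_two_gt_d9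
  have hp1 := log5_lb
  have hp2 := log7_ub
  have key : Real.log ((40:ℝ)/49) = (3:ℝ) * Real.log 2 + (1:ℝ) * Real.log 5 + (-2:ℝ) * Real.log 7 := by
    rw [show ((40:ℝ)/49) = (2^3*5^1)/(7^2) by norm_num,
      Real.log_div (by positivity) (by positivity)]
    simp only [Real.log_mul, Real.log_pow, Real.log_one, (by norm_num : ((1:ℝ)) ≠ 0),
      ne_eq, OfNat.ofNat_ne_zero, not_false_eq_true, pow_ne_zero, mul_ne_zero]
    try rw [Real.log_mul (by positivity) (by positivity)]
    try rw [Real.log_mul (by positivity) (by positivity)]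
    simp [Real.log_pow]
    try push_cast
    try ring
  linarith

lemma logA_1_4 : (-1.3862944 : ℝ) ≤ Real.log (1/4) := by
  have hp0 := Real.log_two_lt_d9
  have key : Real.log ((1:ℝ)/4) = (-2:ℝ) * Real.log 2 := by
    rw [show ((1:ℝ)/4) = (1)/(2^2) by norm_num,
      Real.log_div (by positivity) (by positivity)]
    simp only [Real.log_mul, Real.log_pow, Real.log_one, (by norm_num : ((1:ℝ)) ≠ 0),
      ne_eq, OfNat.ofNat_ne_zero, not_false_eq_true, pow_ne_zero, mul_ne_zero]
    try rw [Real.log_mul (by positivity) (by positivity)]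
    try rw [Real.log_mul (by positivity) (by positivity)]
    simp [Real.log_pow]
    try push_cast
    try ring
  linarith

lemma logA_3_4 : (-0.2876822 : ℝ) ≤ Real.log (3/4) := by
  have hp0 := Real.log_two_lt_d9
  have hp1 := log3_lb
  have key : Real.log ((3:ℝ)/4) = (-2:ℝ) * Real.log 2 + (1:ℝ) * Real.log 3 := by
    rw [show ((3:ℝ)/4) = (3^1)/(2^2) by norm_num,
      Real.log_div (by positivity) (by positivity)]
    simp only [Real.log_mul, Real.log_pow, Real.log_one, (by norm_num : ((1:ℝ)) ≠ 0),
      ne_eq, OfNat.ofNat_ne_zero, not_false_eq_true, pow_ne_zero, mul_ne_zero]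
    try rw [Real.log_mul (by positivity) (by positivity)]
    try rw [Real.log_mul (by positivity) (by positivity)]
    simp [Real.log_pow]
    try push_cast
    try ring
  linarith

lemma logA_3_10 : (-1.2039731 : ℝ) ≤ Real.log (3/10) := by
  have hp0 := Real.log_two_lt_d9
  have hp1 := log3_lb
  have hp2 := log5_ub
  have key : Real.log ((3:ℝ)/10) = (-1:ℝ) * Real.log 2 + (1:ℝ) * Real.log 3 + (-1:ℝ) * Real.log 5 := by
    rw [show ((3:ℝ)/10) = (3^1)/(2^1*5^1) by norm_num,
      Real.log_div (by positivity) (by positivity)]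
    simp only [Real.log_mul, Real.log_pow, Real.log_one, (by norm_num : ((1:ℝ)) ≠ 0),
      ne_eq, OfNat.ofNat_ne_zero, not_false_eq_true, pow_ne_zero, mul_ne_zero]
    try rw [Real.log_mul (by positivity) (by positivity)]
    try rw [Real.log_mul (by positivity) (by positivity)]
    simp [Real.log_pow]
    try push_cast
    try ring
  linarith

lemma logA_7_10 : (-0.3566755 : ℝ) ≤ Real.log (7/10) := by
  have hp0 := Real.log_two_lt_d9
  have hp1 := log5_ub
  have hp2 := log7_lb
  have key : Real.log ((7:ℝ)/10) = (-1:ℝ) * Real.log 2 + (-1:ℝ) * Real.log 5 + (1:ℝ) * Real.log 7 := by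
    rw [show ((7:ℝ)/10) = (7^1)/(2^1*5^1) by norm_num,
      Real.log_div (by positivity) (by positivity)]
    simp only [Real.log_mul, Real.log_pow, Real.log_one, (by norm_num : ((1:ℝ)) ≠ 0),
      ne_eq, OfNat.ofNat_ne_zero, not_false_eq_true, pow_ne_zero, mul_ne_zero]
    try rw [Real.log_mul (by positivity) (by positivity)]
    try rw [Real.log_mul (by positivity) (by positivity)]
    simp [Real.log_pow]
    try push_cast
    try ring
  linarith

lemma logA_1_3 : (-1.0986124 : ℝ) ≤ Real.log (1/3) := by
  have hp0 := log3_ub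
  have key : Real.log ((1:ℝ)/3) = (-1:ℝ) * Real.log 3 := by
    rw [show ((1:ℝ)/3) = (1)/(3^1) by norm_num,
      Real.log_div (by positivity) (by positivity)]
    simp only [Real.log_mul, Real.log_pow, Real.log_one, (by norm_num : ((1:ℝ)) ≠ 0),
      ne_eq, OfNat.ofNat_ne_zero, not_false_eq_true, pow_ne_zero, mul_ne_zero]
    try rw [Real.log_mul (by positivity) (by positivity)]
    try rw [Real.log_mul (by positivity) (by positivity)]
    simp [Real.log_pow]
    try push_cast
    try ring
  linarith

lemma logA_2_3 : (-0.4054653 : ℝ) ≤ Real.log (2/3) := by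
  have hp0 := Real.log_two_gt_d9
  have hp1 := log3_ub
  have key : Real.log ((2:ℝ)/3) = (1:ℝ) * Real.log 2 + (-1:ℝ) * Real.log 3 := by
    rw [show ((2:ℝ)/3) = (2^1)/(3^1) by norm_num,
      Real.log_div (by positivity) (by positivity)]
    simp only [Real.log_mul, Real.log_pow, Real.log_one, (by norm_num : ((1:ℝ)) ≠ 0),
      ne_eq, OfNat.ofNat_ne_zero, not_false_eq_true, pow_ne_zero, mul_ne_zero]
    try rw [Real.log_mul (by positivity) (by positivity)]
    try rw [Real.log_mul (by positivity) (by positivity)]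
    simp [Real.log_pow]
    try push_cast
    try ring
  linarith

lemma logA_3_8 : (-0.9808294 : ℝ) ≤ Real.log (3/8) := by
  have hp0 := Real.log_two_lt_d9
  have hp1 := log3_lb
  have key : Real.log ((3:ℝ)/8) = (-3:ℝ) * Real.log 2 + (1:ℝ) * Real.log 3 := by
    rw [show ((3:ℝ)/8) = (3^1)/(2^3) by norm_num,
      Real.log_div (by positivity) (by positivity)]
    simp only [Real.log_mul, Real.log_pow, Real.log_one, (by norm_num : ((1:ℝ)) ≠ 0),
      ne_eq, OfNat.ofNat_ne_zero, not_false_eq_true, pow_ne_zero, mul_ne_zero]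
    try rw [Real.log_mul (by positivity) (by positivity)]
    try rw [Real.log_mul (by positivity) (by positivity)]
    simp [Real.log_pow]
    try push_cast
    try ring
  linarith

lemma logA_5_8 : (-0.4700039 : ℝ) ≤ Real.log (5/8) := by
  have hp0 := Real.log_two_lt_d9
  have hp1 := log5_lb
  have key : Real.log ((5:ℝ)/8) = (-3:ℝ) * Real.log 2 + (1:ℝ) * Real.log 5 := by
    rw [show ((5:ℝ)/8) = (5^1)/(2^3) by norm_num,
      Real.log_div (by positivity) (by positivity)]
    simp only [Real.log_mul, Real.log_pow, Real.log_one, (by norm_num : ((1:ℝ)) ≠ 0),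
      ne_eq, OfNat.ofNat_ne_zero, not_false_eq_true, pow_ne_zero, mul_ne_zero]
    try rw [Real.log_mul (by positivity) (by positivity)]
    try rw [Real.log_mul (by positivity) (by positivity)]
    simp [Real.log_pow]
    try push_cast
    try ring
  linarith

lemma logA_3_7 : (-0.8472983 : ℝ) ≤ Real.log (3/7) := by
  have hp0 := log3_lb
  have hp1 := log7_ub
  have key : Real.log ((3:ℝ)/7) = (1:ℝ) * Real.log 3 + (-1:ℝ) * Real.log 7 := by
    rw [show ((3:ℝ)/7) = (3^1)/(7^1) by norm_num,
      Real.log_div (by positivity) (by positivity)]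
    simp only [Real.log_mul, Real.log_pow, Real.log_one, (by norm_num : ((1:ℝ)) ≠ 0),
      ne_eq, OfNat.ofNat_ne_zero, not_false_eq_true, pow_ne_zero, mul_ne_zero]
    try rw [Real.log_mul (by positivity) (by positivity)]
    try rw [Real.log_mul (by positivity) (by positivity)]
    simp [Real.log_pow]
    try push_cast
    try ring
  linarith

lemma logA_4_7 : (-0.5596162 : ℝ) ≤ Real.log (4/7) := by
  have hp0 := Real.log_two_gt_d9
  have hp1 := log7_ub
  have key : Real.log ((4:ℝ)/7) = (2:ℝ) * Real.log 2 + (-1:ℝ) * Real.log 7 := by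
    rw [show ((4:ℝ)/7) = (2^2)/(7^1) by norm_num,
      Real.log_div (by positivity) (by positivity)]
    simp only [Real.log_mul, Real.log_pow, Real.log_one, (by norm_num : ((1:ℝ)) ≠ 0),
      ne_eq, OfNat.ofNat_ne_zero, not_false_eq_true, pow_ne_zero, mul_ne_zero]
    try rw [Real.log_mul (by positivity) (by positivity)]
    try rw [Real.log_mul (by positivity) (by positivity)]
    simp [Real.log_pow]
    try push_cast
    try ring
  linarith

set_option maxHeartbeats 2000000 in
lemma key_ineq (δ : ℝ) (h1 : 0 < δ) (h2 : δ < 1/2) :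
    0 ≤ 2*δ*Real.log δ + (1-2*δ)*Real.log (1-δ) + Real.log (12/5) := by
  have h1δ : 0 < 1 - δ := by linarith
  rcases le_or_gt δ (9/50) with hr | hl0
  · -- interval [0, 9/50], tangent a = 9/49
    refine ivl_step δ (9/49) 0 (9/50) (-1.6945966) (-0.2029418) (8362/8281) (-10000/8281) (by norm_num) (by norm_num) h1 h2 (by linarith) hr ?_ ?_ ?_ ?_
    · have := logA_9_49; norm_num at this ⊢; linarith
    · have := logA_40_49; norm_num at this ⊢; linarith
    · rw [show (1-2*δ)*((1-(9/49))/(1-δ)) = ((1-2*δ)*(1-(9/49)))/(1-δ) from by ring,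
        div_le_iff₀ h1δ]
      nlinarith [sq_nonneg (δ - (9/100))]
    · nlinarith [h1, hr]
  rcases le_or_gt δ (13/50) with hr | hl1
  · -- interval [9/50, 13/50], tangent a = 1/4
    refine ivl_step δ (1/4) (9/50) (13/50) (-1.3862944) (-0.2876822) (1642/1521) (-2500/1521) (by norm_num) (by norm_num) h1 h2 (by linarith) hr ?_ ?_ ?_ ?_
    · have := logA_1_4; norm_num at this ⊢; linarith
    · have := logA_3_4; norm_num at this ⊢; linarith
    · rw [show (1-2*δ)*((1-(1/4))/(1-δ)) = ((1-2*δ)*(1-(1/4)))/(1-δ) from by ring,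
        div_le_iff₀ h1δ]
      nlinarith [sq_nonneg (δ - (11/50))]
    · nlinarith [hl0, hr]
  rcases le_or_gt δ (3/10) with hr | hl2
  · -- interval [13/50, 3/10], tangent a = 3/10
    refine ivl_step δ (3/10) (13/50) (3/10) (-1.2039731) (-0.3566755) (373/324) (-625/324) (by norm_num) (by norm_num) h1 h2 (by linarith) hr ?_ ?_ ?_ ?_
    · have := logA_3_10; norm_num at this ⊢; linarith
    · have := logA_7_10; norm_num at this ⊢; linarith
    · rw [show (1-2*δ)*((1-(3/10))/(1-δ)) = ((1-2*δ)*(1-(3/10)))/(1-δ) from by ring,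
        div_le_iff₀ h1δ]
      nlinarith [sq_nonneg (δ - (7/25))]
    · nlinarith [hl1, hr]
  rcases le_or_gt δ (67/200) with hr | hl3
  · -- interval [3/10, 67/200], tangent a = 1/3
    refine ivl_step δ (1/3) (3/10) (67/200) (-1.0986124) (-0.4054653) (353/289) (-625/289) (by norm_num) (by norm_num) h1 h2 (by linarith) hr ?_ ?_ ?_ ?_
    · have := logA_1_3; norm_num at this ⊢; linarith
    · have := logA_2_3; norm_num at this ⊢; linarith
    · rw [show (1-2*δ)*((1-(1/3))/(1-δ)) = ((1-2*δ)*(1-(1/3)))/(1-δ) from by ring,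
        div_le_iff₀ h1δ]
      nlinarith [sq_nonneg (δ - (8/25))]
    · nlinarith [hl2, hr]
  rcases le_or_gt δ (37/100) with hr | hl4
  · -- interval [67/200, 37/100], tangent a = 1/3
    refine ivl_step δ (1/3) (67/200) (37/100) (-1.0986124) (-0.4054653) (218/169) (-400/169) (by norm_num) (by norm_num) h1 h2 (by linarith) hr ?_ ?_ ?_ ?_
    · have := logA_1_3; norm_num at this ⊢; linarith
    · have := logA_2_3; norm_num at this ⊢; linarith
    · rw [show (1-2*δ)*((1-(1/3))/(1-δ)) = ((1-2*δ)*(1-(1/3)))/(1-δ) from by ring,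
        div_le_iff₀ h1δ]
      nlinarith [sq_nonneg (δ - (7/20))]
    · nlinarith [hl3, hr]
  rcases le_or_gt δ (43/100) with hr | hl5
  · -- interval [37/100, 43/100], tangent a = 3/8
    refine ivl_step δ (3/8) (37/100) (43/100) (-0.9808294) (-0.4700039) (13/9) (-25/9) (by norm_num) (by norm_num) h1 h2 (by linarith) hr ?_ ?_ ?_ ?_
    · have := logA_3_8; norm_num at this ⊢; linarith
    · have := logA_5_8; norm_num at this ⊢; linarith
    · rw [show (1-2*δ)*((1-(3/8))/(1-δ)) = ((1-2*δ)*(1-(3/8)))/(1-δ) from by ring,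
        div_le_iff₀ h1δ]
      nlinarith [sq_nonneg (δ - (2/5))]
    · nlinarith [hl4, hr]
  · -- last interval [43/100, 1/2)
    refine ivl_step δ (3/7) (43/100) (1/2) (-0.8472983) (-0.5596162) (1258/729) (-2500/729) (by norm_num) (by norm_num) h1 h2 (by linarith) h2.le ?_ ?_ ?_ ?_
    · have := logA_3_7; norm_num at this ⊢; linarith
    · have := logA_4_7; norm_num at this ⊢; linarith
    · rw [show (1-2*δ)*((1-(3/7))/(1-δ)) = ((1-2*δ)*(1-(3/7)))/(1-δ) from by ring,
        div_le_iff₀ h1δ]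
      nlinarith [sq_nonneg (δ - (23/50))]
    · nlinarith [hl5, h2]

/-- Binary Kullback–Leibler divergence between Bernoulli distributions with
parameters `x` and `y`. -/
noncomputable def klBern (x y : ℝ) : ℝ :=
  x * Real.log (x / y) + (1 - x) * Real.log ((1 - x) / (1 - y))

/-- For all `δ ∈ (0, 1/2)`, `d(δ, 1−δ) ≥ ln(1/(2.4·δ))`. -/
theorem stmt10 (δ : ℝ) (h1 : 0 < δ) (h2 : δ < 1 / 2) :
    Real.log (1 / (2.4 * δ)) ≤ klBern δ (1 - δ) := by
  have h1δ : 0 < 1 - δ := by linarith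
  have core := key_ineq δ h1 h2
  unfold klBern
  rw [show (1:ℝ) - (1-δ) = δ by ring]
  rw [Real.log_div h1.ne' h1δ.ne', Real.log_div h1δ.ne' h1.ne']
  have hlog24 : Real.log (1/(2.4*δ)) = -(Real.log (12/5) + Real.log δ) := by
    rw [one_div, Real.log_inv, Real.log_mul (by norm_num) h1.ne',
      show (2.4:ℝ) = 12/5 by norm_num]
  rw [hlog24]
  linarith
end

section
/- Let d be the binary KL divergence, and fix μ₁ > μ₂ in (0,1) and weights w₁, w₂ > 0. Then inf over pairs (λ₁, λ₂) ∈ (0,1)² with λ₁ ≤ λ₂ of [w₁·d(μ₁, λ₁) + w₂·d(μ₂, λ₂)] equals w₁·d(μ₁, m) + w₂·d(μ₂, m), where m = (w₁μ₁ + w₂μ₂)/(w₁ + w₂) is the weighted mean. -/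
/-- Tangent line inequality for `y ↦ klBern x y` at `m`. -/
lemma klBern_tangent (x m y : ℝ) (hx : x ∈ Set.Ioo (0:ℝ) 1)
    (hm : m ∈ Set.Ioo (0:ℝ) 1) (hy : y ∈ Set.Ioo (0:ℝ) 1) :
    klBern x m + (y - m) * (m - x) / (m * (1 - m)) ≤ klBern x y := by
  obtain ⟨hx0, hx1⟩ := hx
  obtain ⟨hm0, hm1⟩ := hm
  obtain ⟨hy0, hy1⟩ := hy
  have hm1' : (0:ℝ) < 1 - m := by linarith
  have hy1' : (0:ℝ) < 1 - y := by linarith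
  have h1 : Real.log y - Real.log m ≤ (y - m) / m := by
    have h := Real.log_le_sub_one_of_pos (div_pos hy0 hm0)
    rw [Real.log_div hy0.ne' hm0.ne'] at h
    have : (y - m) / m = y / m - 1 := by field_simp
    linarith
  have h2 : Real.log (1 - y) - Real.log (1 - m) ≤ (m - y) / (1 - m) := by
    have h := Real.log_le_sub_one_of_pos (div_pos hy1' hm1')
    rw [Real.log_div hy1'.ne' hm1'.ne'] at h
    have : (m - y) / (1 - m) = (1 - y) / (1 - m) - 1 := by field_simp; ring
    linarith
  have key : (y - m) * (m - x) / (m * (1 - m))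
      ≤ x * (Real.log m - Real.log y) + (1 - x) * (Real.log (1 - m) - Real.log (1 - y)) := by
    have hA : x * (Real.log y - Real.log m) ≤ x * ((y - m) / m) :=
      mul_le_mul_of_nonneg_left h1 hx0.le
    have hB : (1 - x) * (Real.log (1 - y) - Real.log (1 - m)) ≤ (1 - x) * ((m - y) / (1 - m)) :=
      mul_le_mul_of_nonneg_left h2 (by linarith)
    have hEq : (y - m) * (m - x) / (m * (1 - m))
        = -(x * ((y - m) / m)) - (1 - x) * ((m - y) / (1 - m)) := by
      field_simp
      ring
    rw [hEq]
    linarith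
  have expand : klBern x y - klBern x m
      = x * (Real.log m - Real.log y) + (1 - x) * (Real.log (1 - m) - Real.log (1 - y)) := by
    unfold klBern
    rw [Real.log_div hx0.ne' hy0.ne', Real.log_div hx0.ne' hm0.ne',
      Real.log_div (by linarith : (0:ℝ) < 1 - x).ne' hy1'.ne',
      Real.log_div (by linarith : (0:ℝ) < 1 - x).ne' hm1'.ne']
    ring
  linarith

/-- For `μ₁ > μ₂` and positive weights, the infimum of
`w₁·d(μ₁, λ₁) + w₂·d(μ₂, λ₂)` over `λ₁ ≤ λ₂` in `(0,1)²` is attained at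
`λ₁ = λ₂ = m`, the weighted mean `m = (w₁μ₁ + w₂μ₂)/(w₁ + w₂)`. -/
theorem stmt13 (μ₁ μ₂ w₁ w₂ : ℝ)
    (hμ₁ : μ₁ ∈ Set.Ioo (0 : ℝ) 1) (hμ₂ : μ₂ ∈ Set.Ioo (0 : ℝ) 1)
    (hlt : μ₂ < μ₁) (hw₁ : 0 < w₁) (hw₂ : 0 < w₂) :
    sInf {x : ℝ | ∃ l₁ l₂ : ℝ, l₁ ∈ Set.Ioo (0 : ℝ) 1 ∧ l₂ ∈ Set.Ioo (0 : ℝ) 1 ∧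
        l₁ ≤ l₂ ∧ x = w₁ * klBern μ₁ l₁ + w₂ * klBern μ₂ l₂}
      = w₁ * klBern μ₁ ((w₁ * μ₁ + w₂ * μ₂) / (w₁ + w₂))
        + w₂ * klBern μ₂ ((w₁ * μ₁ + w₂ * μ₂) / (w₁ + w₂)) := by
  set m : ℝ := (w₁ * μ₁ + w₂ * μ₂) / (w₁ + w₂) with hm_def
  have hw : (0:ℝ) < w₁ + w₂ := by linarith
  have hm : m ∈ Set.Ioo (0:ℝ) 1 := by
    constructor
    · apply div_pos _ hw
      nlinarith [hμ₁.1, hμ₂.1]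
    · rw [div_lt_one hw]
      nlinarith [hμ₁.2, hμ₂.2]
  have hm0 := hm.1
  have hm1 : (0:ℝ) < 1 - m := by linarith [hm.2]
  have hmm : (0:ℝ) < m * (1 - m) := mul_pos hm0 hm1
  have hzero : w₁ * (m - μ₁) + w₂ * (m - μ₂) = 0 := by
    rw [hm_def]; field_simp; ring
  have hmμ₂ : 0 ≤ m - μ₂ := by
    rw [hm_def]
    rw [le_sub_iff_add_le, ← sub_nonneg]
    have : (w₁ * μ₁ + w₂ * μ₂) / (w₁ + w₂) - (0 + μ₂) = w₁ * (μ₁ - μ₂) / (w₁ + w₂) := by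
      field_simp; ring
    rw [this]
    exact div_nonneg (by nlinarith) hw.le
  set V : ℝ := w₁ * klBern μ₁ m + w₂ * klBern μ₂ m with hV
  have lb : ∀ x ∈ {x : ℝ | ∃ l₁ l₂ : ℝ, l₁ ∈ Set.Ioo (0 : ℝ) 1 ∧ l₂ ∈ Set.Ioo (0 : ℝ) 1 ∧
      l₁ ≤ l₂ ∧ x = w₁ * klBern μ₁ l₁ + w₂ * klBern μ₂ l₂}, V ≤ x := by
    rintro x ⟨l₁, l₂, hl₁, hl₂, hle, rfl⟩
    have k1 := klBern_tangent μ₁ m l₁ hμ₁ hm hl₁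
    have k2 := klBern_tangent μ₂ m l₂ hμ₂ hm hl₂
    have hsum : 0 ≤ w₁ * ((l₁ - m) * (m - μ₁)) + w₂ * ((l₂ - m) * (m - μ₂)) := by
      have h1 : w₁ * ((l₁ - m) * (m - μ₁)) + w₂ * ((l₂ - m) * (m - μ₂))
          = (w₂ * (m - μ₂)) * (l₂ - l₁)
            + (l₁ - m) * (w₁ * (m - μ₁) + w₂ * (m - μ₂)) := by ring
      rw [h1, hzero]
      have : 0 ≤ (w₂ * (m - μ₂)) * (l₂ - l₁) := by
        apply mul_nonneg (mul_nonneg hw₂.le hmμ₂) (by linarith)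
      linarith
    have h3 : 0 ≤ w₁ * ((l₁ - m) * (m - μ₁) / (m * (1 - m)))
        + w₂ * ((l₂ - m) * (m - μ₂) / (m * (1 - m))) := by
      have h4 := div_nonneg hsum hmm.le
      have heq : (w₁ * ((l₁ - m) * (m - μ₁)) + w₂ * ((l₂ - m) * (m - μ₂))) / (m * (1 - m))
          = w₁ * ((l₁ - m) * (m - μ₁) / (m * (1 - m)))
            + w₂ * ((l₂ - m) * (m - μ₂) / (m * (1 - m))) := by ring
      rw [heq] at h4
      exact h4
    have k1' : w₁ * klBern μ₁ m + w₁ * ((l₁ - m) * (m - μ₁) / (m * (1 - m)))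
        ≤ w₁ * klBern μ₁ l₁ := by nlinarith
    have k2' : w₂ * klBern μ₂ m + w₂ * ((l₂ - m) * (m - μ₂) / (m * (1 - m)))
        ≤ w₂ * klBern μ₂ l₂ := by nlinarith
    rw [hV]
    linarith
  have mem : V ∈ {x : ℝ | ∃ l₁ l₂ : ℝ, l₁ ∈ Set.Ioo (0 : ℝ) 1 ∧ l₂ ∈ Set.Ioo (0 : ℝ) 1 ∧
      l₁ ≤ l₂ ∧ x = w₁ * klBern μ₁ l₁ + w₂ * klBern μ₂ l₂} :=
    ⟨m, m, hm, hm, le_refl m, rfl⟩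
  exact le_antisymm (csInf_le ⟨V, lb⟩ mem) (le_csInf ⟨V, mem⟩ lb)
end

section
/- LUCB exploration dichotomy: let arms i ∈ S have intervals [L_i, U_i] and empirical values V̂_i, let b = argmax_i V̂_i and c = argmax_{j ≠ b} U_j, and let γ be a real number. Assume the true best value V* and second-best value V₂* satisfy V₂* ≤ γ ≤ V*, each true arm value V_i lies in [L_i, U_i], and the stopping condition fails: U_c − L_b > ε. Suppose moreover V̂_c ≤ V̂_b, μ̂-based intervals satisfy V̂_i = (L_i + U_i)/2 for the two arms b and c. Then at least one of the arms ℓ ∈ {b, c} satisfies both γ ∈ [L_ℓ, U_ℓ] and U_ℓ − L_ℓ > ε. -/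
/-- LUCB exploration dichotomy: with `b` the arm of maximal empirical value,
`c` the arm of maximal upper bound among the others, valid intervals containing
the true values, `γ` between the second-best and best true values, midpoint
empirical values, and a failing stopping condition `U_c − L_b > ε`, at least one
arm `ℓ ∈ {b, c}` satisfies both `γ ∈ [L_ℓ, U_ℓ]` and `U_ℓ − L_ℓ > ε`. -/
theorem stmt16 {ι : Type*} [Fintype ι]
    (V L U Vhat : ι → ℝ) (ε γ : ℝ) (hε : 0 ≤ ε)
    (hvalid : ∀ i, L i ≤ V i ∧ V i ≤ U i)
    (sstar : ι) (hstar : ∀ i, V i ≤ V sstar)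
    (hγ₁ : γ ≤ V sstar) (hγ₂ : ∀ j, j ≠ sstar → V j ≤ γ)
    (b c : ι) (hb : ∀ i, Vhat i ≤ Vhat b)
    (hcb : c ≠ b) (hc : ∀ j, j ≠ b → U j ≤ U c)
    (hmidb : Vhat b = (L b + U b) / 2) (hmidc : Vhat c = (L c + U c) / 2)
    (hVhat : Vhat c ≤ Vhat b)
    (hstop : ε < U c - L b) :
    ∃ ℓ, (ℓ = b ∨ ℓ = c) ∧ L ℓ ≤ γ ∧ γ ≤ U ℓ ∧ ε < U ℓ - L ℓ := by
  have hsum : L c + U c ≤ L b + U b := by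
    rw [hmidb, hmidc] at hVhat; linarith
  obtain ⟨hLb, hUb⟩ := hvalid b
  obtain ⟨hLc, hUc⟩ := hvalid c
  obtain ⟨hLs, hUs⟩ := hvalid sstar
  have hin : (L b ≤ γ ∧ γ ≤ U b) ∨ (L c ≤ γ ∧ γ ≤ U c) := by
    by_contra h
    push_neg at h
    obtain ⟨h1, h2⟩ := h
    rcases le_or_gt (L b) γ with hb1 | hb1 <;> rcases le_or_gt (L c) γ with hc1 | hc1
    · -- γ above both lowers, so above both uppers: contradiction via sstar
      have hUb' := h1 hb1
      have hUc' := h2 hc1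
      by_cases hbs : b = sstar
      · have : γ ≤ V b := hbs ▸ hγ₁
        linarith
      · have h3 : U sstar ≤ U c := by
          by_cases hsb : sstar = b
          · exact (hbs hsb.symm).elim
          · exact hc sstar hsb
        linarith
    · -- L b ≤ γ < L c : U b < γ < L c, contradicts hstop via hsum
      have hUb' := h1 hb1
      linarith
    · -- γ < L b, L c ≤ γ : U c < γ < L b, contradicts hstop
      have hUc' := h2 hc1
      linarith
    · -- γ below both lowers
      by_cases hcs : c = sstar
      · have hbs : b ≠ sstar := fun h => hcb (hcs.trans h.symm)
        have := hγ₂ b hbs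
        linarith
      · have := hγ₂ c hcs
        linarith
  rcases hin with ⟨h1, h2⟩ | ⟨h1, h2⟩
  · by_cases hw : ε < U b - L b
    · exact ⟨b, Or.inl rfl, h1, h2, hw⟩
    · push_neg at hw
      exact ⟨c, Or.inr rfl, by linarith, by linarith, by linarith⟩
  · by_cases hw : ε < U c - L c
    · exact ⟨c, Or.inr rfl, h1, h2, hw⟩
    · push_neg at hw
      exact ⟨b, Or.inl rfl, by linarith, by linarith, by linarith⟩
end

section
/- Under the UGapE setting with valid intervals: let arms i ∈ S have true values V_i ∈ [L_i, U_i], let s* be the arm with the largest true value and s₂* the second largest, let b = argmin_i B_i with B_i = max_{j≠i} U_j − L_i and c = argmax_{j≠b} U_j, and suppose the algorithm has not stopped: U_c − L_b > ε. If s* ∈ {b, c} and the arm R selected among {b, c} (the one with the wider interval) equals s*, then 2·(U_R − L_R) ≥ V(s*) − V(s₂*) + ε·[R = b]; in particular 2·(U_R − L_R) ≥ V(s*) − V(s₂*). -/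
/-- UGapE, cases where the selected arm is the optimal one: if the algorithm has
not stopped (`U_c − L_b > ε`) and the wider-interval arm `R ∈ {b, c}` equals the
best arm `s*`, then `2·(U_R − L_R) ≥ V(s*) − V(s₂*) + ε·[R = b]`; in particular
`2·(U_R − L_R) ≥ V(s*) − V(s₂*)`. -/
theorem stmt17 {ι : Type*} [Fintype ι] [DecidableEq ι]
    (hcard : 1 < Fintype.card ι)
    (V L U : ι → ℝ) (ε : ℝ) (hε : 0 ≤ ε)
    (hvalid : ∀ i, L i ≤ V i ∧ V i ≤ U i)
    (sstar s2 : ι) (hstar : ∀ i, V i ≤ V sstar)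
    (hs2 : s2 ≠ sstar) (hs2' : ∀ j, j ≠ sstar → V j ≤ V s2)
    (B : ι → ℝ) (hB : ∀ i, B i = sSup (U '' {j | j ≠ i}) - L i)
    (b c : ι) (hb : ∀ i, B b ≤ B i)
    (hcb : c ≠ b) (hc : ∀ j, j ≠ b → U j ≤ U c)
    (hstop : ε < U c - L b)
    (R : ι) (hR : R = b ∨ R = c)
    (hwide : U b - L b ≤ U R - L R ∧ U c - L c ≤ U R - L R)
    (hRstar : R = sstar) :
    V sstar - V s2 + (if R = b then ε else 0) ≤ 2 * (U R - L R) ∧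
    V sstar - V s2 ≤ 2 * (U R - L R) := by
  have hvb := hvalid b
  have hvc := hvalid c
  rcases hR with h | h
  · -- R = b, sstar = b
    have hsb : sstar = b := h ▸ hRstar.symm ▸ rfl
    have hcs : c ≠ sstar := hsb ▸ hcb
    have h2 : V c ≤ V s2 := hs2' c hcs
    have hVb : V sstar ≤ U b := hsb ▸ (hvalid b).2
    have hw := hwide.2
    rw [if_pos h, h]
    rw [h] at hw
    constructor <;> linarith [hvc.1]
  · -- R = c, sstar = c
    have hsc : sstar = c := h ▸ hRstar.symm ▸ rfl
    have hbs : b ≠ sstar := fun hh => hcb (hsc ▸ hh.symm)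
    have h2 : V b ≤ V s2 := hs2' b hbs
    have hVc : V sstar ≤ U c := hsc ▸ (hvalid c).2
    -- B b = U c - L b
    have hub : ∀ x ∈ U '' {j | j ≠ b}, x ≤ U c := by
      rintro x ⟨j, hj, rfl⟩; exact hc j hj
    have hsupb : sSup (U '' {j | j ≠ b}) = U c := by
      apply le_antisymm
      · exact csSup_le ⟨U c, ⟨c, hcb, rfl⟩⟩ hub
      · exact le_csSup ⟨U c, hub⟩ ⟨c, hcb, rfl⟩
    have hBb : B b = U c - L b := by rw [hB, hsupb]
    have hsupc : sSup (U '' {j | j ≠ c}) ≤ max (U b) (U c) := by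
      refine csSup_le ⟨U b, ⟨b, fun hh => hcb hh.symm, rfl⟩⟩ ?_
      rintro x ⟨j, hj, rfl⟩
      by_cases hjb : j = b
      · subst hjb; exact le_max_left _ _
      · exact le_trans (hc j hjb) (le_max_right _ _)
    have hBc : B c ≤ max (U b) (U c) - L c := by
      rw [hB]; exact sub_le_sub_right hsupc _
    have h1 : U c - L b ≤ max (U b) (U c) - L c := hBb ▸ (hb c).trans hBc
    have hw := hwide.1
    rw [h] at hw ⊢
    rw [if_neg hcb]
    rcases le_total (U b) (U c) with hm | hm
    · rw [max_eq_right hm] at h1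
      constructor <;> linarith [hvb.1]
    · rw [max_eq_left hm] at h1
      constructor <;> linarith [hvb.1]
end
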